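/- arXiv:1402.2797 — 4 statements merged into one kernel-verified Lean document; each statement's English description precedes it below -/
import Mathlib

section
/- For the non-Markovian scheme X_{k+1} = (1 - αh) X_k + (σ√h/2)(ξ_k + ξ_{k+1}) applied to the Ornstein–Uhlenbeck process, with 0 < αh < 1, the variance satisfies Var(X_N) = (σ²/(2α)) · [1 - (1-αh)^{2N}/(1-αh)] for every N ≥ 1. -/
open MeasureTheory ProbabilityTheory Real Filter

section AuxGaussian

open Set Topology
open scoped NNReal ENNReal

private lemma aux_integrable_exp : Integrable (fun x : ℝ => exp (-(2⁻¹:ℝ) * x^2)) := by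
  exact integrable_exp_neg_mul_sq (by norm_num)

private lemma aux_integrable_sq_exp :
    Integrable (fun x : ℝ => x^2 * exp (-(2⁻¹:ℝ) * x^2)) := by
  have h := integrable_rpow_mul_exp_neg_mul_sq (b := 2⁻¹) (by norm_num) (s := 2) (by norm_num)
  refine h.congr (Filter.Eventually.of_forall fun x => ?_)
  simp only [Real.rpow_two]

private lemma aux_integral_sq_exp :
    ∫ x : ℝ, x^2 * exp (-(2⁻¹:ℝ) * x^2) = Real.sqrt (2*π) := by
  set f : ℝ → ℝ := fun x => -x * exp (-(2⁻¹:ℝ) * x^2) with hfdef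
  set f' : ℝ → ℝ := fun x => (x^2 - 1) * exp (-(2⁻¹:ℝ) * x^2) with hf'def
  have hderiv : ∀ x : ℝ, HasDerivAt f (f' x) x := by
    intro x
    have h1 : HasDerivAt (fun y : ℝ => -(2⁻¹:ℝ) * y^2) (-(2⁻¹:ℝ) * (2 * x^1)) x :=
      (hasDerivAt_pow 2 x).const_mul _
    have h2 := h1.exp
    have h3 := ((hasDerivAt_id x).neg).mul h2
    refine h3.congr_deriv ?_
    simp [hf'def]
    ring
  have hf'int : Integrable f' := by
    refine (aux_integrable_sq_exp.sub aux_integrable_exp).congr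
      (Filter.Eventually.of_forall fun x => ?_)
    simp [hf'def]; ring
  have htop0 : Tendsto (fun x : ℝ => x * exp (-(2⁻¹:ℝ) * x^2)) atTop (𝓝 0) := by
    have hlo := rpow_mul_exp_neg_mul_sq_isLittleO_exp_neg (b := 2⁻¹) (by norm_num) 1
    have h2 : Tendsto (fun x : ℝ => exp (-(1/2) * x)) atTop (𝓝 0) := by
      have := Real.tendsto_exp_neg_atTop_nhds_zero.comp
        (Filter.Tendsto.const_mul_atTop (by norm_num : (0:ℝ) < 1/2) tendsto_id)
      refine this.congr fun x => ?_
      simp [Function.comp, neg_mul]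
    have := hlo.isBigO.trans_tendsto h2
    refine this.congr fun x => ?_
    rw [Real.rpow_one]
  have hftop : Tendsto f atTop (𝓝 0) := by
    have := htop0.neg
    rw [neg_zero] at this
    refine this.congr fun x => ?_
    simp [hfdef]
  have hfbot : Tendsto f atBot (𝓝 0) := by
    have := htop0.comp tendsto_neg_atBot_atTop
    rw [show ((fun x : ℝ => x * exp (-(2⁻¹:ℝ) * x^2)) ∘ (fun x : ℝ => -x)) = f by
      funext x; simp [hfdef, Function.comp, neg_sq]] at this
    exact this
  have hIoi : ∫ x in Ioi (0:ℝ), f' x = 0 - f 0 :=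
    integral_Ioi_of_hasDerivAt_of_tendsto (hderiv 0).continuousAt.continuousWithinAt
      (fun x _ => hderiv x) hf'int.integrableOn hftop
  have hIic : ∫ x in Iic (0:ℝ), f' x = f 0 - 0 :=
    integral_Iic_of_hasDerivAt_of_tendsto (hderiv 0).continuousAt.continuousWithinAt
      (fun x _ => hderiv x) hf'int.integrableOn hfbot
  have htot : ∫ x, f' x = 0 := by
    rw [← intervalIntegral.integral_Iic_add_Ioi (b := (0:ℝ)) hf'int.integrableOn
      hf'int.integrableOn, hIic, hIoi]
    ring
  have hsplit : ∫ x, f' x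
      = (∫ x : ℝ, x^2 * exp (-(2⁻¹:ℝ) * x^2)) - ∫ x : ℝ, exp (-(2⁻¹:ℝ) * x^2) := by
    rw [← integral_sub aux_integrable_sq_exp aux_integrable_exp]
    refine integral_congr_ae (Filter.Eventually.of_forall fun x => ?_)
    simp [hf'def]; ring
  have hg := integral_gaussian (2⁻¹ : ℝ)
  rw [htot] at hsplit
  rw [show π / 2⁻¹ = 2*π by ring] at hg
  linarith

private lemma aux_pdf_eq (x : ℝ) :
    gaussianPDFReal 0 1 x = (Real.sqrt (2*π))⁻¹ * exp (-(2⁻¹:ℝ) * x^2) := by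
  rw [gaussianPDFReal]
  norm_num
  left
  ring_nf

private lemma aux_integral_gaussianReal (g : ℝ → ℝ) :
    ∫ x, g x ∂(gaussianReal 0 1)
      = ∫ x, ((Real.sqrt (2*π))⁻¹ * exp (-(2⁻¹:ℝ) * x^2)) * g x := by
  rw [gaussianReal_of_var_ne_zero 0 one_ne_zero]
  have h1 : gaussianPDF 0 1 = fun x => ((Real.toNNReal (gaussianPDFReal 0 1 x) : ℝ≥0) : ℝ≥0∞) :=
    rfl
  rw [h1, integral_withDensity_eq_integral_smul
    ((measurable_gaussianPDFReal 0 1).real_toNNReal) g]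
  refine integral_congr_ae (Filter.Eventually.of_forall fun x => ?_)
  show (gaussianPDFReal 0 1 x).toNNReal • g x = _
  rw [NNReal.smul_def, Real.coe_toNNReal _ (gaussianPDFReal_nonneg 0 1 x), aux_pdf_eq x]
  rfl

private lemma aux_sqrt_two_pi_pos : (0:ℝ) < Real.sqrt (2*π) :=
  Real.sqrt_pos.2 (by positivity)

private lemma aux_odd_integral : ∫ x : ℝ, exp (-(2⁻¹:ℝ) * x^2) * x = 0 := by
  have A : MeasurableEmbedding (fun x : ℝ => -x) :=
    (Homeomorph.neg ℝ).isClosedEmbedding.measurableEmbedding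
  have h1 : ∫ x : ℝ, exp (-(2⁻¹:ℝ) * x^2) * x
      = ∫ x : ℝ, exp (-(2⁻¹:ℝ) * (-x)^2) * (-x) := by
    conv_lhs => rw [← Measure.map_neg_eq_self (volume : Measure ℝ)]
    exact A.integral_map _
  have h2 : ∫ x : ℝ, exp (-(2⁻¹:ℝ) * (-x)^2) * (-x)
      = - ∫ x : ℝ, exp (-(2⁻¹:ℝ) * x^2) * x := by
    rw [← integral_neg]
    refine integral_congr_ae (Filter.Eventually.of_forall fun x => ?_)
    simp [neg_sq]
  rw [h2] at h1
  linarith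

private lemma aux_mean_gaussianReal : ∫ x, x ∂(gaussianReal 0 1) = 0 := by
  rw [aux_integral_gaussianReal]
  simp_rw [mul_assoc]
  rw [integral_const_mul, aux_odd_integral, mul_zero]

private lemma aux_sq_gaussianReal : ∫ x, x^2 ∂(gaussianReal 0 1) = 1 := by
  rw [aux_integral_gaussianReal]
  have : ∀ x : ℝ, (Real.sqrt (2*π))⁻¹ * exp (-(2⁻¹:ℝ) * x^2) * x^2
      = (Real.sqrt (2*π))⁻¹ * (x^2 * exp (-(2⁻¹:ℝ) * x^2)) := fun x => by ring
  simp_rw [this]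
  rw [integral_const_mul, aux_integral_sq_exp, inv_mul_cancel₀ aux_sqrt_two_pi_pos.ne']

private lemma aux_integrable_sq_gaussianReal :
    Integrable (fun x : ℝ => x^2) (gaussianReal 0 1) := by
  rw [gaussianReal_of_var_ne_zero 0 one_ne_zero]
  rw [integrable_withDensity_iff (measurable_gaussianPDF 0 1)
    (Filter.Eventually.of_forall fun x => ENNReal.ofReal_lt_top)]
  refine (aux_integrable_sq_exp.const_mul ((Real.sqrt (2*π))⁻¹)).congr
    (Filter.Eventually.of_forall fun x => ?_)
  simp only [gaussianPDF_def]
  rw [ENNReal.toReal_ofReal (gaussianPDFReal_nonneg 0 1 x), aux_pdf_eq x]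
  ring

private lemma aux_memℒp_gaussianReal : MemLp (fun x : ℝ => x) 2 (gaussianReal 0 1) := by
  refine (memLp_two_iff_integrable_sq aestronglyMeasurable_id).2 ?_
  exact aux_integrable_sq_gaussianReal

variable {Ω : Type*} [MeasureSpace Ω] [IsProbabilityMeasure (ℙ : Measure Ω)]

omit [IsProbabilityMeasure (ℙ : Measure Ω)] in
private lemma aux_memℒp_xi {ξ : Ω → ℝ} (hm : Measurable ξ)
    (hg : Measure.map ξ ℙ = gaussianReal 0 1) : MemLp ξ 2 ℙ := by
  have h := (memLp_map_measure_iff (aestronglyMeasurable_id) hm.aemeasurable).1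
    (by rw [hg]; exact aux_memℒp_gaussianReal)
  exact h

omit [IsProbabilityMeasure (ℙ : Measure Ω)] in
private lemma aux_mean_xi {ξ : Ω → ℝ} (hm : Measurable ξ)
    (hg : Measure.map ξ ℙ = gaussianReal 0 1) : ∫ ω, ξ ω ∂ℙ = 0 := by
  have h := integral_map (μ := (ℙ : Measure Ω)) hm.aemeasurable
    (f := fun x : ℝ => x) aestronglyMeasurable_id
  rw [hg, aux_mean_gaussianReal] at h
  exact h.symm

omit [IsProbabilityMeasure (ℙ : Measure Ω)] in
private lemma aux_sqmean_xi {ξ : Ω → ℝ} (hm : Measurable ξ)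
    (hg : Measure.map ξ ℙ = gaussianReal 0 1) : ∫ ω, (ξ ω)^2 ∂ℙ = 1 := by
  have h := integral_map (μ := (ℙ : Measure Ω)) hm.aemeasurable
    (f := fun x : ℝ => x^2) (continuous_pow 2).aestronglyMeasurable
  rw [hg, aux_sq_gaussianReal] at h
  exact h.symm

private lemma aux_var_xi {ξ : Ω → ℝ} (hm : Measurable ξ)
    (hg : Measure.map ξ ℙ = gaussianReal 0 1) : variance ξ ℙ = 1 := by
  rw [variance_eq_sub (aux_memℒp_xi hm hg)]
  have h1 : ℙ[ξ] = 0 := aux_mean_xi hm hg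
  have h2 : ℙ[ξ^2] = 1 := aux_sqmean_xi hm hg
  rw [h1, h2]
  norm_num

private lemma aux_variance_const_add {Z : Ω → ℝ} (hZ : Integrable Z ℙ) (m : ℝ) :
    variance (fun ω => m + Z ω) ℙ = variance Z ℙ := by
  have h1 : ∫ ω, (m + Z ω) ∂ℙ = m + ∫ ω, Z ω ∂ℙ := by
    rw [integral_add (integrable_const m) hZ, integral_const]
    simp
  unfold variance evariance
  rw [h1]
  congr 1
  refine lintegral_congr fun ω => ?_
  congr 2
  ring

end AuxGaussian

noncomputable def coefA (β c : ℝ) : ℕ → ℕ → ℝ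
  | 0, _ => 0
  | N+1, i => (if i = N+1 then c else 0) + (if i = N then c else 0) + β * coefA β c N i

lemma coefA_of_gt (β c : ℝ) : ∀ N i, N < i → coefA β c N i = 0 := by
  intro N
  induction N with
  | zero => intro i _; rfl
  | succ N ih =>
    intro i hi
    rw [coefA]
    rw [if_neg (by omega), if_neg (by omega), ih i (by omega)]
    ring

lemma coefA_succ_self (β c : ℝ) (N : ℕ) : coefA β c (N+1) (N+1) = c := by
  rw [coefA, if_pos rfl, if_neg (by omega), coefA_of_gt β c N (N+1) (by omega)]
  ring

lemma coefA_succ_mid (β c : ℝ) (N : ℕ) : coefA β c (N+1) N = c + β * coefA β c N N := by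
  rw [coefA, if_neg (by omega), if_pos rfl]
  ring

lemma coefA_succ_lt (β c : ℝ) {N i : ℕ} (h : i < N) :
    coefA β c (N+1) i = β * coefA β c N i := by
  rw [coefA, if_neg (by omega), if_neg (by omega)]
  ring

lemma sumSq_rec (β c : ℝ) (N : ℕ) :
    ∑ i ∈ Finset.range (N+2), (coefA β c (N+1) i)^2
      = β^2 * ∑ i ∈ Finset.range (N+1), (coefA β c N i)^2
        + 2*c^2 + 2*β*c*(coefA β c N N) := by
  rw [Finset.sum_range_succ, Finset.sum_range_succ,
    Finset.sum_range_succ (f := fun i => (coefA β c N i)^2)]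
  rw [coefA_succ_self, coefA_succ_mid]
  have h2 : ∑ i ∈ Finset.range N, (coefA β c (N+1) i)^2
      = β^2 * ∑ i ∈ Finset.range N, (coefA β c N i)^2 := by
    rw [Finset.mul_sum]
    refine Finset.sum_congr rfl fun i hi => ?_
    rw [coefA_succ_lt β c (Finset.mem_range.1 hi)]
    ring
  rw [h2]
  ring

theorem nonMarkovian_OU_variance
    {Ω : Type*} [MeasureSpace Ω] [IsProbabilityMeasure (ℙ : Measure Ω)]
    (α σ h x₀ : ℝ) (hα : 0 < α) (hσ : 0 < σ) (hh : 0 < h) (hαh : α * h < 1)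
    (ξ : ℕ → Ω → ℝ)
    (hmeas : ∀ k, Measurable (ξ k))
    (hindep : iIndepFun ξ ℙ)
    (hgauss : ∀ k, Measure.map (ξ k) ℙ = gaussianReal 0 1)
    (X : ℕ → Ω → ℝ)
    (hX0 : ∀ ω, X 0 ω = x₀)
    (hXrec : ∀ k ω, X (k + 1) ω
      = (1 - α * h) * X k ω + σ * Real.sqrt h / 2 * (ξ k ω + ξ (k + 1) ω)) :
    ∀ N : ℕ, 1 ≤ N → variance (X N) ℙ
      = σ ^ 2 / (2 * α) * (1 - (1 - α * h) ^ (2 * N) / (1 - α * h)) := by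
  set β : ℝ := 1 - α * h with hβ
  set c : ℝ := σ * Real.sqrt h / 2 with hc
  have hs2 : Real.sqrt h ^ 2 = h := Real.sq_sqrt hh.le
  have hβpos : 0 < β := by rw [hβ]; linarith
  -- representation of X
  have hrep : ∀ M : ℕ,
      X M = fun ω => β^M * x₀ + ∑ i ∈ Finset.range (M+1), coefA β c M i * ξ i ω := by
    intro M
    induction M with
    | zero =>
      funext ω
      simp [hX0 ω, coefA]
    | succ M ih =>
      funext ω
      rw [hXrec M ω, congrFun ih ω]
      rw [Finset.sum_range_succ, Finset.sum_range_succ, Finset.sum_range_succ,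
        coefA_succ_self, coefA_succ_mid]
      have hsplit : ∑ i ∈ Finset.range M, coefA β c (M+1) i * ξ i ω
          = β * ∑ i ∈ Finset.range M, coefA β c M i * ξ i ω := by
        rw [Finset.mul_sum]
        refine Finset.sum_congr rfl fun i hi => ?_
        rw [coefA_succ_lt β c (Finset.mem_range.1 hi)]
        ring
      rw [hsplit]
      ring
  -- moments of ξ
  have hXi2 : ∀ k, MemLp (ξ k) 2 ℙ := fun k => aux_memℒp_xi (hmeas k) (hgauss k)
  have hvarXi : ∀ k, variance (ξ k) ℙ = 1 := fun k => aux_var_xi (hmeas k) (hgauss k)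
  -- variance as sum of squares of coefficients
  have hvarS : ∀ M : ℕ,
      variance (X M) ℙ = ∑ i ∈ Finset.range (M+1), (coefA β c M i)^2 := by
    intro M
    have hY : ∀ i : ℕ, MemLp (fun ω => coefA β c M i * ξ i ω) 2 ℙ :=
      fun i => (hXi2 i).const_mul _
    have heq : (fun ω => ∑ i ∈ Finset.range (M+1), coefA β c M i * ξ i ω)
        = ∑ i ∈ Finset.range (M+1), (fun ω => coefA β c M i * ξ i ω) := by
      funext ω
      simp [Finset.sum_apply]
    have hZ : MemLp (fun ω => ∑ i ∈ Finset.range (M+1), coefA β c M i * ξ i ω) 2 ℙ := by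
      rw [heq]
      exact memLp_finset_sum' _ (fun i _ => hY i)
    have hpair : Set.Pairwise ↑(Finset.range (M+1))
        (fun i j => IndepFun (fun ω => coefA β c M i * ξ i ω)
          (fun ω => coefA β c M j * ξ j ω) ℙ) := by
      intro i _ j _ hij
      exact (hindep.indepFun hij).comp (measurable_const_mul _) (measurable_const_mul _)
    rw [hrep M, aux_variance_const_add (hZ.integrable one_le_two), heq,
      IndepFun.variance_sum (fun i _ => hY i) hpair]
    refine Finset.sum_congr rfl fun i _ => ?_
    rw [variance_const_mul, hvarXi i, mul_one]
  -- closed form for the sum of squares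
  suffices hsum : ∀ N : ℕ, 1 ≤ N → ∑ i ∈ Finset.range (N+1), (coefA β c N i)^2
      = σ ^ 2 / (2 * α) * (1 - β ^ (2 * N) / β) by
    intro N hN
    rw [hvarS N, hsum N hN]
  intro N hN
  induction N, hN using Nat.le_induction with
  | base =>
    have h10 : coefA β c 1 0 = c := by
      rw [coefA]
      norm_num [coefA]
    have h11 : coefA β c 1 1 = c := coefA_succ_self β c 0
    rw [Finset.sum_range_succ, Finset.sum_range_succ, Finset.sum_range_zero, h10, h11]
    rw [hβ, hc]
    set s : ℝ := Real.sqrt h with hs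
    have hseq : h = s^2 := by rw [hs, Real.sq_sqrt hh.le]
    rw [hseq]
    have hne : (1:ℝ) - α * s^2 ≠ 0 := by
      rw [← hseq]
      intro hcon
      nlinarith
    have hne' : (1:ℝ) - s^2 * α ≠ 0 := by rw [mul_comm]; exact hne
    field_simp
    ring
  | succ N hN1 ih =>
    obtain ⟨M, rfl⟩ : ∃ M, N = M + 1 := ⟨N - 1, by omega⟩
    rw [sumSq_rec, ih, coefA_succ_self]
    rw [show 2 * (M + 1 + 1) = 2 * (M + 1) + 2 by omega, pow_add]
    generalize β ^ (2 * (M + 1)) = A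
    rw [hβ, hc]
    set s : ℝ := Real.sqrt h with hs
    have hseq : h = s^2 := by rw [hs, Real.sq_sqrt hh.le]
    rw [hseq]
    have hne : (1:ℝ) - α * s^2 ≠ 0 := by
      rw [← hseq]
      intro hcon
      nlinarith
    field_simp
    ring
end

section
/- Let V : ℝ^d → ℝ be C³ with a = -∇V, and suppose exp(-(2/σ²)V) is integrable and all integrands below are integrable and decay appropriately at infinity. Then for any C³ function u : ℝ^d → ℝ of polynomial growth with polynomially growing derivatives, the quantity B(x) = (1/2)[∑_{i,j} a^j ∂_j a^i ∂_i u + (σ²/2) ∑_{i,j} ∂_j a^i ∂_i∂_j u + (σ²/2) ∑_{i,j} ∂²_{jj} a^i ∂_i u] satisfies ∫_{ℝ^d} B(x) exp(-(2/σ²) V(x)) dx = 0. -/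
open MeasureTheory Real Filter Measure Module Topology

section AuxDivergence

/-- 1D: the integral of an integrable derivative of a function vanishing at `±∞` is zero. -/
lemma oneD_integral_deriv_eq_zero {g g' : ℝ → ℝ} (hg : ∀ t, HasDerivAt g (g' t) t)
    (hint : Integrable g') (htop : Tendsto g atTop (nhds 0))
    (hbot : Tendsto g atBot (nhds 0)) : ∫ t, g' t = 0 := by
  have h1 : ∫ t in Set.Iic (0:ℝ), g' t = g 0 - 0 :=
    integral_Iic_of_hasDerivAt_of_tendsto' (fun x _ => hg x) hint.integrableOn hbot
  have h2 : ∫ t in Set.Ioi (0:ℝ), g' t = 0 - g 0 :=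
    integral_Ioi_of_hasDerivAt_of_tendsto' (fun x _ => hg x) hint.integrableOn htop
  have h3 := integral_add_compl (measurableSet_Iic (a := (0:ℝ))) hint
  rw [Set.compl_Iic] at h3
  rw [← h3, h1, h2]; ring

variable {E : Type*} [NormedAddCommGroup E] [NormedSpace ℝ E] [MeasurableSpace E]

lemma lineDeriv_integral_aux1 {μ : Measure E} [SigmaFinite μ] {F F' : E × ℝ → ℝ}
    (hF : ∀ x, HasLineDerivAt ℝ F (F' x) x ((0 : E), (1:ℝ)))
    (hF' : Integrable F' (μ.prod volume))
    (hdec : Tendsto F (cocompact (E × ℝ)) (nhds 0)) :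
    ∫ x, F' x ∂(μ.prod volume) = 0 := by
  have emb : ∀ x : E, Tendsto (fun t : ℝ => (x, t)) (cocompact ℝ) (cocompact (E × ℝ)) := by
    intro x
    have hiso : Isometry (fun t : ℝ => (x, t)) := by
      apply Isometry.of_dist_eq
      intro a b
      simp [Prod.dist_eq, dist_nonneg]
    exact hiso.isClosedEmbedding.tendsto_cocompact
  rw [integral_prod _ hF']
  have : ∀ᵐ x ∂μ, ∫ t, F' (x, t) = 0 := by
    filter_upwards [hF'.prod_right_ae] with x hx
    apply oneD_integral_deriv_eq_zero (g := fun t => F (x, t)) _ hx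
    · exact hdec.comp ((emb x).mono_left (by rw [cocompact_eq_atBot_atTop]; exact le_sup_right))
    · exact hdec.comp ((emb x).mono_left (by rw [cocompact_eq_atBot_atTop]; exact le_sup_left))
    · intro t
      convert (hF (x, t)).scomp_of_eq t ((hasDerivAt_id t).add (hasDerivAt_const t (-t))) (by simp)
        <;> first | rfl | simp
  rw [integral_congr_ae this, integral_zero]

variable [BorelSpace E] [FiniteDimensional ℝ E]

lemma lineDeriv_integral_aux2 {μ : Measure (E × ℝ)} [IsAddHaarMeasure μ] {F F' : E × ℝ → ℝ}
    (hF : ∀ x, HasLineDerivAt ℝ F (F' x) x ((0 : E), (1:ℝ)))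
    (hF' : Integrable F' μ)
    (hdec : Tendsto F (cocompact (E × ℝ)) (nhds 0)) :
    ∫ x, F' x ∂μ = 0 := by
  let ν : Measure E := addHaar
  have A : ν.prod volume = (addHaarScalarFactor (ν.prod volume) μ) • μ :=
    isAddLeftInvariant_eq_smul _ _
  have HF' : Integrable F' (ν.prod volume) := by
    rw [A]; exact hF'.smul_measure_nnreal
  have h0 := lineDeriv_integral_aux1 hF HF' hdec
  rw [A, integral_smul_nnreal_measure] at h0
  rcases smul_eq_zero.1 h0 with h | h
  · exfalso
    have : addHaarScalarFactor (ν.prod volume) μ ≠ 0 := by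
      simp [addHaarScalarFactor_pos_of_isAddHaarMeasure (ν.prod volume) μ |>.ne']
    exact this (by exact_mod_cast h)
  · exact h

/-- The integral (against a Haar measure on a finite-dimensional space) of an integrable
directional derivative of a function tending to `0` at infinity vanishes. -/
lemma integral_lineDeriv_eq_zero {μ : Measure E} [IsAddHaarMeasure μ]
    {F F' : E → ℝ} {v : E}
    (hF : ∀ x, HasLineDerivAt ℝ F (F' x) x v)
    (hF' : Integrable F' μ)
    (hdec : Tendsto F (cocompact E) (nhds 0)) :
    ∫ x, F' x ∂μ = 0 := by
  rcases eq_or_ne v 0 with rfl | hv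
  · have HF' : ∀ x, F' x = 0 := by
      intro x
      simpa [(hasLineDerivAt_zero (f := F) (x := x)).lineDeriv] using (hF x).lineDeriv.symm
    simp [HF']
  have : Nontrivial E := nontrivial_iff.2 ⟨v, 0, hv⟩
  let n := finrank ℝ E
  let E' := Fin (n - 1) → ℝ
  obtain ⟨L, hL⟩ : ∃ L : E ≃L[ℝ] (E' × ℝ), L v = (0, 1) := by
    have : finrank ℝ (E' × ℝ) = n := by simpa [this, E'] using Nat.sub_add_cancel finrank_pos
    have L₀ : E ≃L[ℝ] (E' × ℝ) := (ContinuousLinearEquiv.ofFinrankEq this).symm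
    obtain ⟨M, hM⟩ : ∃ M : (E' × ℝ) ≃L[ℝ] (E' × ℝ), M (L₀ v) = (0, 1) := by
      apply SeparatingDual.exists_continuousLinearEquiv_apply_eq
      · simpa using hv
      · simp
    exact ⟨L₀.trans M, by simp [hM]⟩
  let ν := Measure.map L μ
  have L_emb : MeasurableEmbedding L := L.toHomeomorph.measurableEmbedding
  suffices H : ∫ x : E' × ℝ, F' (L.symm x) ∂ν = 0 by
    have hmap : μ = Measure.map L.symm ν := by
      simp [ν, Measure.map_map L.symm.continuous.measurable L.continuous.measurable]
    have hL2 : IsClosedEmbedding L.symm := L.symm.toHomeomorph.isClosedEmbedding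
    rw [hmap, hL2.measurableEmbedding.integral_map]
    simpa using H
  have : IsAddHaarMeasure ν := L.isAddHaarMeasure_map μ
  apply lineDeriv_integral_aux2
  · intro x
    have heq : F = (F ∘ L.symm) ∘ (L : E →ₗ[ℝ] (E' × ℝ)) := by ext y; simp
    specialize hF (L.symm x)
    rw [heq] at hF
    convert hF.of_comp using 1
    · simp
    · simp [← hL]
  · rw [L_emb.integrable_map_iff]; simpa [L_emb.integrable_map_iff, Function.comp_def] using hF'
  · exact hdec.comp (L.symm.toHomeomorph.isClosedEmbedding.tendsto_cocompact)

end AuxDivergence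

/-- Partial derivative in the `i`-th coordinate direction. -/
noncomputable def pd {d : ℕ} (f : EuclideanSpace ℝ (Fin d) → ℝ) (i : Fin d)
    (x : EuclideanSpace ℝ (Fin d)) : ℝ :=
  fderiv ℝ f x (EuclideanSpace.single i 1)

/-- The leading error coefficient function `B` of the non-Markovian scheme. -/
noncomputable def Bcoef {d : ℕ} (σ : ℝ) (a : EuclideanSpace ℝ (Fin d) → EuclideanSpace ℝ (Fin d))
    (u : EuclideanSpace ℝ (Fin d) → ℝ) (x : EuclideanSpace ℝ (Fin d)) : ℝ :=
  (1 / 2) *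
    ( (∑ i, ∑ j, a x j * pd (fun y => a y i) j x * pd u i x)
      + (σ ^ 2 / 2) * ∑ i, ∑ j, pd (fun y => a y i) j x * pd (fun y => pd u i y) j x
      + (σ ^ 2 / 2) * ∑ i, ∑ j, pd (fun y => pd (fun z => a z i) j y) j x * pd u i x )

theorem gibbs_average_of_B_vanishes
    {d : ℕ} (σ : ℝ) (hσ : 0 < σ)
    (V : EuclideanSpace ℝ (Fin d) → ℝ) (hV : ContDiff ℝ 3 V)
    (a : EuclideanSpace ℝ (Fin d) → EuclideanSpace ℝ (Fin d))
    (ha : ∀ x, a x = -gradient V x)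
    (hweight : Integrable (fun x => Real.exp (-(2 / σ ^ 2) * V x)))
    (u : EuclideanSpace ℝ (Fin d) → ℝ) (hu : ContDiff ℝ 3 u)
    (hugrowth : ∃ C : ℝ, ∃ n : ℕ, ∀ x,
      |u x| + (∑ i, |pd u i x|) + ∑ i, ∑ j, |pd (fun y => pd u i y) j x|
        ≤ C * (1 + ‖x‖) ^ n)
    (hBint : Integrable (fun x => Bcoef σ a u x * Real.exp (-(2 / σ ^ 2) * V x)))
    (hint : ∀ i j : Fin d,
      Integrable (fun x => a x j * pd (fun y => a y i) j x * pd u i x *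
          Real.exp (-(2 / σ ^ 2) * V x)) ∧
      Integrable (fun x => pd (fun y => a y i) j x * pd (fun y => pd u i y) j x *
          Real.exp (-(2 / σ ^ 2) * V x)) ∧
      Integrable (fun x => pd (fun y => pd (fun z => a z i) j y) j x * pd u i x *
          Real.exp (-(2 / σ ^ 2) * V x)))
    (hdecay : ∀ i j : Fin d,
      Tendsto (fun x => pd (fun y => a y i) j x * pd u i x *
          Real.exp (-(2 / σ ^ 2) * V x)) (Filter.cocompact _) (nhds 0) ∧
      Tendsto (fun x => a x j * pd u i x *
          Real.exp (-(2 / σ ^ 2) * V x)) (Filter.cocompact _) (nhds 0)) :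
    ∫ x, Bcoef σ a u x * Real.exp (-(2 / σ ^ 2) * V x) = 0 := by
  have hσ2 : (σ : ℝ) ^ 2 ≠ 0 := pow_ne_zero 2 hσ.ne'
  -- coordinate identity for `a`
  have hacoord : ∀ (k : Fin d) (y : EuclideanSpace ℝ (Fin d)),
      a y k = -(fderiv ℝ V y (EuclideanSpace.single k 1)) := by
    intro k y
    rw [ha]
    have h1 : gradient V y k = @inner ℝ _ _ (gradient V y) (EuclideanSpace.single k 1) := by
      rw [EuclideanSpace.inner_single_right]; simp
    have : gradient V y k = fderiv ℝ V y (EuclideanSpace.single k 1) := by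
      rw [h1, gradient, InnerProductSpace.toDual_symm_apply]
    simp [this]
  have hA : ∀ k : Fin d, ContDiff ℝ 2 (fun y => a y k) := by
    intro k
    have : (fun y => a y k) = fun y => -(fderiv ℝ V y (EuclideanSpace.single k 1)) := by
      funext y; exact hacoord k y
    rw [this]
    exact ((hV.fderiv_right (m := 2) (by norm_num)).clm_apply contDiff_const).neg
  -- the key per-pair derivative computation
  have hline : ∀ (i j : Fin d) (x : EuclideanSpace ℝ (Fin d)),
      HasLineDerivAt ℝ
        (fun x => pd (fun y => a y i) j x * pd u i x * Real.exp (-(2 / σ ^ 2) * V x))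
        (pd (fun y => pd (fun z => a z i) j y) j x * pd u i x * Real.exp (-(2 / σ ^ 2) * V x)
          + pd (fun y => a y i) j x * pd (fun y => pd u i y) j x * Real.exp (-(2 / σ ^ 2) * V x)
          + (2 / σ ^ 2) * (a x j * pd (fun y => a y i) j x * pd u i x *
              Real.exp (-(2 / σ ^ 2) * V x)))
        x (EuclideanSpace.single j 1) := by
    intro i j x
    have hpdA : ContDiff ℝ 1 (fun x => pd (fun y => a y i) j x) := by
      simp only [pd]
      exact ((hA i).fderiv_right (m := 1) (by norm_num)).clm_apply contDiff_const
    have hpdU : ContDiff ℝ 2 (fun x => pd u i x) := by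
      simp only [pd]
      exact (hu.fderiv_right (m := 2) (by norm_num)).clm_apply contDiff_const
    have hA_at : HasFDerivAt (fun y => pd (fun z => a z i) j y)
        (fderiv ℝ (fun y => pd (fun z => a z i) j y) x) x :=
      ((hpdA.differentiable one_ne_zero) x).hasFDerivAt
    have hU_at : HasFDerivAt (fun y => pd u i y) (fderiv ℝ (fun y => pd u i y) x) x :=
      ((hpdU.differentiable two_ne_zero) x).hasFDerivAt
    have hV_at : HasFDerivAt V (fderiv ℝ V x) x :=
      ((hV.differentiable (by norm_num)) x).hasFDerivAt
    have hinner : HasFDerivAt (fun y => -(2 / σ ^ 2) * V y)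
        ((-(2 / σ ^ 2)) • fderiv ℝ V x) x := hV_at.const_mul _
    have hρ_at : HasFDerivAt (fun y => Real.exp (-(2 / σ ^ 2) * V y))
        (Real.exp (-(2 / σ ^ 2) * V x) • ((-(2 / σ ^ 2)) • fderiv ℝ V x)) x := hinner.exp
    have hF_at := (hA_at.mul hU_at).mul hρ_at
    have hl := hF_at.hasLineDerivAt (EuclideanSpace.single j 1)
    convert hl using 1 <;> [rfl; rfl; rfl; skip]
    have hVj : fderiv ℝ V x (EuclideanSpace.single j 1) = -(a x j) := by
      rw [hacoord j x]; ring
    simp only [ContinuousLinearMap.add_apply, ContinuousLinearMap.smul_apply, smul_eq_mul, pd, hVj, Pi.mul_apply]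
    ring
  -- per-pair vanishing identity
  have key : ∀ i j : Fin d,
      (∫ x, pd (fun y => pd (fun z => a z i) j y) j x * pd u i x *
          Real.exp (-(2 / σ ^ 2) * V x))
        + (∫ x, pd (fun y => a y i) j x * pd (fun y => pd u i y) j x *
          Real.exp (-(2 / σ ^ 2) * V x))
        + (2 / σ ^ 2) * (∫ x, a x j * pd (fun y => a y i) j x * pd u i x *
          Real.exp (-(2 / σ ^ 2) * V x)) = 0 := by
    intro i j
    obtain ⟨h1, h2, h3⟩ := hint i j
    have hI : Integrable (fun x =>
        pd (fun y => pd (fun z => a z i) j y) j x * pd u i x * Real.exp (-(2 / σ ^ 2) * V x)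
          + pd (fun y => a y i) j x * pd (fun y => pd u i y) j x * Real.exp (-(2 / σ ^ 2) * V x)
          + (2 / σ ^ 2) * (a x j * pd (fun y => a y i) j x * pd u i x *
              Real.exp (-(2 / σ ^ 2) * V x))) :=
      (h3.add h2).add (h1.const_mul _)
    have h0 := integral_lineDeriv_eq_zero (μ := (volume : Measure (EuclideanSpace ℝ (Fin d))))
      (hline i j) hI (hdecay i j).1
    have h32 : Integrable (fun x =>
        pd (fun y => pd (fun z => a z i) j y) j x * pd u i x * Real.exp (-(2 / σ ^ 2) * V x)
          + pd (fun y => a y i) j x * pd (fun y => pd u i y) j x *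
            Real.exp (-(2 / σ ^ 2) * V x)) := h3.add h2
    have hc1 : Integrable (fun x => (2 / σ ^ 2) * (a x j * pd (fun y => a y i) j x * pd u i x *
        Real.exp (-(2 / σ ^ 2) * V x))) := h1.const_mul _
    rw [integral_add h32 hc1, integral_add h3 h2, integral_const_mul _ _] at h0
    linarith
  -- expand the integrand as a double sum
  have expand : (fun x => Bcoef σ a u x * Real.exp (-(2 / σ ^ 2) * V x))
      = fun x => ∑ i, ∑ j,
        ((1 / 2) * (a x j * pd (fun y => a y i) j x * pd u i x *
            Real.exp (-(2 / σ ^ 2) * V x))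
          + (σ ^ 2 / 4) * (pd (fun y => a y i) j x * pd (fun y => pd u i y) j x *
            Real.exp (-(2 / σ ^ 2) * V x))
          + (σ ^ 2 / 4) * (pd (fun y => pd (fun z => a z i) j y) j x * pd u i x *
            Real.exp (-(2 / σ ^ 2) * V x))) := by
    funext x
    simp only [Bcoef, Finset.sum_add_distrib, ← Finset.mul_sum, ← Finset.sum_mul]
    ring
  rw [expand]
  have hterm : ∀ (i j : Fin d), Integrable (fun x =>
      (1 / 2) * (a x j * pd (fun y => a y i) j x * pd u i x *
          Real.exp (-(2 / σ ^ 2) * V x))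
        + (σ ^ 2 / 4) * (pd (fun y => a y i) j x * pd (fun y => pd u i y) j x *
          Real.exp (-(2 / σ ^ 2) * V x))
        + (σ ^ 2 / 4) * (pd (fun y => pd (fun z => a z i) j y) j x * pd u i x *
          Real.exp (-(2 / σ ^ 2) * V x))) := by
    intro i j
    obtain ⟨h1, h2, h3⟩ := hint i j
    exact ((h1.const_mul _).add (h2.const_mul _)).add (h3.const_mul _)
  rw [integral_finset_sum _ (fun i _ => integrable_finset_sum _ (fun j _ => hterm i j))]
  refine Finset.sum_eq_zero fun i _ => ?_
  rw [integral_finset_sum _ (fun j _ => hterm i j)]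
  refine Finset.sum_eq_zero fun j _ => ?_
  obtain ⟨h1, h2, h3⟩ := hint i j
  have hc1 : Integrable (fun x => (1 / 2) * (a x j * pd (fun y => a y i) j x * pd u i x *
      Real.exp (-(2 / σ ^ 2) * V x))) := h1.const_mul _
  have hc2 : Integrable (fun x => (σ ^ 2 / 4) * (pd (fun y => a y i) j x *
      pd (fun y => pd u i y) j x * Real.exp (-(2 / σ ^ 2) * V x))) := h2.const_mul _
  have hc3 : Integrable (fun x => (σ ^ 2 / 4) * (pd (fun y => pd (fun z => a z i) j y) j x *
      pd u i x * Real.exp (-(2 / σ ^ 2) * V x))) := h3.const_mul _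
  have hc12 : Integrable (fun x => (1 / 2) * (a x j * pd (fun y => a y i) j x * pd u i x *
      Real.exp (-(2 / σ ^ 2) * V x)) + (σ ^ 2 / 4) * (pd (fun y => a y i) j x *
      pd (fun y => pd u i y) j x * Real.exp (-(2 / σ ^ 2) * V x))) := hc1.add hc2
  rw [integral_add hc12 hc3, integral_add hc1 hc2,
    integral_const_mul _ _, integral_const_mul _ _, integral_const_mul _ _]
  have k := key i j
  have key' : σ ^ 2 * (∫ x, pd (fun y => pd (fun z => a z i) j y) j x * pd u i x *
        Real.exp (-(2 / σ ^ 2) * V x))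
      + σ ^ 2 * (∫ x, pd (fun y => a y i) j x * pd (fun y => pd u i y) j x *
        Real.exp (-(2 / σ ^ 2) * V x))
      + 2 * (∫ x, a x j * pd (fun y => a y i) j x * pd u i x *
        Real.exp (-(2 / σ ^ 2) * V x)) = 0 := by
    have hcancel : σ ^ 2 * (2 / σ ^ 2) = 2 := by field_simp
    have h := congrArg (fun z : ℝ => σ ^ 2 * z) k
    simp only [mul_zero] at h
    linear_combination h - (∫ x, a x j * pd (fun y => a y i) j x * pd u i x *
      Real.exp (-(2 / σ ^ 2) * V x)) * hcancel
  linear_combination key' / 4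
end

section
/- Let B : [0,∞) × ℝ^d → ℝ satisfy |B(t,x)| ≤ K(1+|x|^κ) e^{-λ_u(τ-t)} for 0 ≤ t ≤ τ, suppose ∫ B(t,y) ρ(y) dy = 0 for all t (where ρ is a probability density), and suppose the transition expectations satisfy the geometric ergodicity bound |E[B̃(s, X_x(t))] - ∫ B̃(s,y)ρ(y) dy| ≤ K(1+|x|^κ) e^{-λ_B t} for all 0 ≤ s ≤ τ and t > 0, where B̃(t,x) = B(t,x)e^{λ_u(τ-t)}. Then |∫_0^τ E[B(t, X_x(t))] dt| ≤ K'(1+|x|^κ) e^{-λ τ} for some constants K' > 0 and λ > 0 independent of τ and x. -/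
open MeasureTheory Real Filter

theorem leading_error_coefficient_decays_exponentially
    {Ω : Type*} [MeasureSpace Ω] [IsProbabilityMeasure (volume : Measure Ω)]
    (d κ : ℕ) (K lu lB : ℝ) (hK : 0 < K) (hlu : 0 < lu) (hlB : 0 < lB)
    (ρ : EuclideanSpace ℝ (Fin d) → ℝ)
    (hρnonneg : ∀ y, 0 ≤ ρ y) (hρint : Integrable ρ) (hρ1 : ∫ y, ρ y = 1) :
    ∃ K' > (0 : ℝ), ∃ lam > (0 : ℝ), ∀ τ : ℝ, 0 < τ →
      ∀ (B : ℝ → EuclideanSpace ℝ (Fin d) → ℝ)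
        (X : ℝ → Ω → EuclideanSpace ℝ (Fin d))
        (x : EuclideanSpace ℝ (Fin d)),
        Measurable (Function.uncurry B) →
        (∀ t, Measurable (X t)) →
        (∀ ω, X 0 ω = x) →
        (∀ t y, 0 ≤ t → t ≤ τ →
          |B t y| ≤ K * (1 + ‖y‖ ^ κ) * Real.exp (-lu * (τ - t))) →
        (∀ t, ∫ y, B t y * ρ y = 0) →
        (∀ s t : ℝ, 0 ≤ s → s ≤ τ → 0 < t →
          |(∫ ω : Ω, B s (X t ω) * Real.exp (lu * (τ - s)) ∂(volume : MeasureTheory.Measure Ω))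
              - ∫ y, B s y * Real.exp (lu * (τ - s)) * ρ y|
            ≤ K * (1 + ‖x‖ ^ κ) * Real.exp (-lB * t)) →
        |∫ t in (0 : ℝ)..τ, ∫ ω : Ω, B t (X t ω) ∂(volume : MeasureTheory.Measure Ω)|
          ≤ K' * (1 + ‖x‖ ^ κ) * Real.exp (-lam * τ) := by
  set lam0 : ℝ := min lu lB with hlam0def
  have hlam0 : 0 < lam0 := lt_min hlu hlB
  refine ⟨2 * K / lam0, by positivity, lam0 / 2, by positivity, ?_⟩
  intro τ hτ B X x hB hX hX0 hBbd hρ0 herg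
  have hx : (0:ℝ) < 1 + ‖x‖ ^ κ := by positivity
  -- pointwise bound on the integrand
  have key : ∀ t ∈ Set.uIoc (0:ℝ) τ,
      ‖∫ ω : Ω, B t (X t ω) ∂(volume : Measure Ω)‖
        ≤ K * (1 + ‖x‖ ^ κ) * Real.exp (-lam0 * τ) := by
    intro t ht
    rw [Set.uIoc_of_le hτ.le] at ht
    obtain ⟨ht0, htτ⟩ := ht
    have h1 := herg t t ht0.le htτ ht0
    have h2 : (∫ y, B t y * Real.exp (lu * (τ - t)) * ρ y) = 0 := by
      have hfun : ∀ y : EuclideanSpace ℝ (Fin d),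
          B t y * Real.exp (lu * (τ - t)) * ρ y
            = Real.exp (lu * (τ - t)) * (B t y * ρ y) := fun y => by ring
      simp only [hfun]
      rw [integral_const_mul, hρ0 t, mul_zero]
    have h3 : (∫ ω : Ω, B t (X t ω) * Real.exp (lu * (τ - t)) ∂(volume : Measure Ω))
        = (∫ ω : Ω, B t (X t ω) ∂(volume : Measure Ω)) * Real.exp (lu * (τ - t)) := by
      rw [integral_mul_const]
    rw [h2, sub_zero, h3, abs_mul, abs_of_pos (Real.exp_pos _)] at h1
    have hIb : |∫ ω : Ω, B t (X t ω) ∂(volume : Measure Ω)|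
        ≤ K * (1 + ‖x‖ ^ κ) * Real.exp (-lB * t) * Real.exp (-(lu * (τ - t))) := by
      have hepos : (0:ℝ) < Real.exp (lu * (τ - t)) := Real.exp_pos _
      calc |∫ ω : Ω, B t (X t ω) ∂(volume : Measure Ω)|
          = |∫ ω : Ω, B t (X t ω) ∂(volume : Measure Ω)| * Real.exp (lu * (τ - t))
              * (Real.exp (lu * (τ - t)))⁻¹ := by field_simp
        _ ≤ K * (1 + ‖x‖ ^ κ) * Real.exp (-lB * t) * (Real.exp (lu * (τ - t)))⁻¹ := by
            apply mul_le_mul_of_nonneg_right h1 (by positivity)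
        _ = K * (1 + ‖x‖ ^ κ) * Real.exp (-lB * t) * Real.exp (-(lu * (τ - t))) := by
            rw [Real.exp_neg]

    rw [Real.norm_eq_abs]
    refine hIb.trans ?_
    have hexp : Real.exp (-lB * t) * Real.exp (-(lu * (τ - t))) ≤ Real.exp (-lam0 * τ) := by
      rw [← Real.exp_add]
      apply Real.exp_le_exp.mpr
      have h4 : lam0 * t ≤ lB * t := mul_le_mul_of_nonneg_right (min_le_right _ _) ht0.le
      have h5 : lam0 * (τ - t) ≤ lu * (τ - t) :=
        mul_le_mul_of_nonneg_right (min_le_left _ _) (by linarith)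
      nlinarith
    rw [mul_assoc]
    exact mul_le_mul_of_nonneg_left hexp (by positivity)
  have hI := intervalIntegral.norm_integral_le_of_norm_le_const key
  rw [Real.norm_eq_abs, sub_zero, abs_of_pos hτ] at hI
  refine hI.trans ?_
  -- absorb τ into the exponential
  have hE : Real.exp (-lam0 * τ) = Real.exp (-(lam0/2) * τ) * Real.exp (-(lam0/2) * τ) := by
    rw [← Real.exp_add]; ring_nf
  have hu : lam0 * τ / 2 * Real.exp (-(lam0/2) * τ) ≤ 1 := by
    have h := Real.add_one_le_exp (lam0 * τ / 2)
    have he : Real.exp (-(lam0/2) * τ) = (Real.exp (lam0 * τ / 2))⁻¹ := by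
      rw [← Real.exp_neg]; ring_nf
    rw [he]
    have hp : (0:ℝ) < Real.exp (lam0 * τ / 2) := Real.exp_pos _
    rw [mul_inv_le_iff₀ hp, one_mul]
    nlinarith
  rw [hE]
  have hEp : (0:ℝ) < Real.exp (-(lam0/2) * τ) := Real.exp_pos _
  have : K * (1 + ‖x‖ ^ κ) * (Real.exp (-(lam0/2) * τ) * Real.exp (-(lam0/2) * τ)) * τ
      = (K * (1 + ‖x‖ ^ κ) * Real.exp (-(lam0/2) * τ)) * (2 / lam0)
        * (lam0 * τ / 2 * Real.exp (-(lam0/2) * τ)) := by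
    field_simp
  rw [this]
  calc (K * (1 + ‖x‖ ^ κ) * Real.exp (-(lam0/2) * τ)) * (2 / lam0)
        * (lam0 * τ / 2 * Real.exp (-(lam0/2) * τ))
      ≤ (K * (1 + ‖x‖ ^ κ) * Real.exp (-(lam0/2) * τ)) * (2 / lam0) * 1 := by
        apply mul_le_mul_of_nonneg_left hu (by positivity)
    _ = 2 * K / lam0 * (1 + ‖x‖ ^ κ) * Real.exp (-(lam0/2) * τ) := by ring
    _ = 2 * K / lam0 * (1 + ‖x‖ ^ κ) * Real.exp (-(lam0 / 2) * τ) := rfl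
end

section
/- Let X(t) be an exponentially ergodic process satisfying |E φ(X_x(t)) - φ^{erg}| ≤ C(x) e^{-λ t} for all t ≥ 0, and suppose a numerical approximation satisfies the finite-time error expansion E φ(X_x(τ)) - E φ(X_N) = C_0(τ,x) h + C(τ,x) h² with |C_0(τ,x)| ≤ K(1+|x|^κ)e^{-λ'τ} and |C(τ,x)| ≤ K(1+|x|^κ e^{-λ'τ}). Then lim sup_{τ→∞} |E φ(X_x(τ)) - E φ(X_N)| ≤ K h² where N = τ/h, i.e. the scheme approximates the ergodic average φ^{erg} to second order in h. -/
open Real Filter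

theorem second_order_ergodic_limit_from_expansion
    (d κ : ℕ) (h K Cx l l' φerg : ℝ)
    (hh : 0 < h) (hK : 0 < K) (hl : 0 < l) (hl' : 0 < l')
    (x : EuclideanSpace ℝ (Fin d))
    (u : ℝ → ℝ) (v : ℕ → ℝ) (C₀ C : ℝ → ℝ)
    (herg : ∀ t : ℝ, 0 ≤ t → |u t - φerg| ≤ Cx * Real.exp (-l * t))
    (hexp : ∀ N : ℕ, u (N * h) - v N = C₀ (N * h) * h + C (N * h) * h ^ 2)
    (hC₀ : ∀ τ : ℝ, 0 ≤ τ → |C₀ τ| ≤ K * (1 + ‖x‖ ^ κ) * Real.exp (-l' * τ))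
    (hC : ∀ τ : ℝ, 0 ≤ τ → |C τ| ≤ K * (1 + ‖x‖ ^ κ * Real.exp (-l' * τ))) :
    Filter.limsup (fun N : ℕ => |u (N * h) - v N|) Filter.atTop ≤ K * h ^ 2 := by
  set e : ℕ → ℝ := fun N => Real.exp (-l' * (N * h)) with he
  have hten : Tendsto e atTop (nhds 0) := by
    have heq : e = fun N : ℕ => (Real.exp (-(l' * h))) ^ N := by
      funext N
      rw [he, ← Real.exp_nat_mul]
      ring_nf
    rw [heq]
    exact tendsto_pow_atTop_nhds_zero_of_lt_one (Real.exp_pos _).le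
      (Real.exp_lt_one_iff.mpr (by nlinarith))
  set g : ℕ → ℝ := fun N => K * (1 + ‖x‖ ^ κ) * e N * h + K * (1 + ‖x‖ ^ κ * e N) * h ^ 2
    with hg
  have h1 : Tendsto (fun N => K * (1 + ‖x‖ ^ κ) * e N * h) atTop (nhds 0) := by
    simpa [he, neg_mul] using (hten.const_mul (K * (1 + ‖x‖ ^ κ))).mul_const h
  have h2 : Tendsto (fun N => K * (1 + ‖x‖ ^ κ * e N) * h ^ 2) atTop (nhds (K * h ^ 2)) := by
    have h3 : Tendsto (fun N => 1 + ‖x‖ ^ κ * e N) atTop (nhds 1) := by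
      simpa [he, neg_mul] using (hten.const_mul (‖x‖ ^ κ)).const_add 1
    simpa using (h3.const_mul K).mul_const (h ^ 2)
  have hgten : Tendsto g atTop (nhds (K * h ^ 2)) := by
    simpa using h1.add h2
  have hbound : ∀ N : ℕ, |u (N * h) - v N| ≤ g N := by
    intro N
    have hNh : (0 : ℝ) ≤ N * h := by positivity
    rw [hexp N]
    calc |C₀ (N * h) * h + C (N * h) * h ^ 2|
        ≤ |C₀ (N * h) * h| + |C (N * h) * h ^ 2| := abs_add_le _ _
      _ = |C₀ (N * h)| * h + |C (N * h)| * h ^ 2 := by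
          rw [abs_mul, abs_mul, abs_of_pos hh, abs_of_pos (by positivity : (0:ℝ) < h ^ 2)]
      _ ≤ K * (1 + ‖x‖ ^ κ) * e N * h + K * (1 + ‖x‖ ^ κ * e N) * h ^ 2 := by
          gcongr
          · exact hC₀ _ hNh
          · exact hC _ hNh
  have hcb : IsCoboundedUnder (· ≤ ·) atTop (fun N : ℕ => |u (N * h) - v N|) := by
    exact ((Filter.isBoundedUnder_of (r := (· ≥ ·)) ⟨0, fun N => abs_nonneg _⟩)).isCoboundedUnder_le
  have hgb : IsBoundedUnder (· ≤ ·) atTop g := hgten.isBoundedUnder_le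
  calc Filter.limsup (fun N : ℕ => |u (N * h) - v N|) Filter.atTop
      ≤ Filter.limsup g Filter.atTop :=
        Filter.limsup_le_limsup (Filter.Eventually.of_forall hbound) hcb hgb
    _ = K * h ^ 2 := hgten.limsup_eq
end
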